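/- For every finitely presented MV-algebra A ≅ M(P) with P ⊆ [0,1]^k a rational polyhedron, the homomorphisms from A to the standard MV-algebra [0,1] are in bijection with the points of P: each point p ∈ P gives the evaluation homomorphism f ↦ f(p), and every homomorphism arises this way from a unique point. -/

import Mathlib

open Set

/-- The unit cube [0,1]^k. -/
def unitCube (k : ℕ) : Set (Fin k → ℝ) := {x | ∀ i, x i ∈ Icc (0:ℝ) 1}

/-- A McNaughton function on [0,1]^k: continuous, with values in [0,1], and
piecewise (affine) linear with integer coefficients. -/
def IsMcNaughton {k : ℕ} (f : (Fin k → ℝ) → ℝ) : Prop :=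
  ContinuousOn f (unitCube k) ∧
  (∀ x ∈ unitCube k, f x ∈ Icc (0:ℝ) 1) ∧
  ∃ (m : ℕ) (a : Fin m → Fin k → ℤ) (b : Fin m → ℤ),
    ∀ x ∈ unitCube k, ∃ j : Fin m, f x = (∑ i, (a j i : ℝ) * x i) + (b j : ℝ)

/-- A rational polyhedron: a finite union of convex hulls of finitely many
rational points. -/
def IsRationalPolyhedron {k : ℕ} (P : Set (Fin k → ℝ)) : Prop :=
  ∃ (m : ℕ) (V : Fin m → Finset (Fin k → ℚ)),
    P = ⋃ j : Fin m, convexHull ℝ ((fun q : Fin k → ℚ => fun i => (q i : ℝ)) '' ↑(V j))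

def McN (k : ℕ) : Type := {f : (Fin k → ℝ) → ℝ // IsMcNaughton f}

/-- A homomorphism from M(P) to the standard MV-algebra [0,1], described on
representatives: a map on McNaughton functions, landing in [0,1], invariant
under agreement on P, preserving ⊥, ¬ and ⊕ (computed pointwise on P). -/
def IsHomToI {k : ℕ} (P : Set (Fin k → ℝ)) (h : McN k → ℝ) : Prop :=
  (∀ f : McN k, h f ∈ Icc (0:ℝ) 1) ∧
  (∀ f g : McN k, Set.EqOn f.1 g.1 P → h f = h g) ∧
  (∀ u : McN k, (∀ x ∈ P, u.1 x = 0) → h u = 0) ∧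
  (∀ f u : McN k, (∀ x ∈ P, u.1 x = 1 - f.1 x) → h u = 1 - h f) ∧
  (∀ f g u : McN k, (∀ x ∈ P, u.1 x = min 1 (f.1 x + g.1 x)) → h u = min 1 (h f + h g))


noncomputable def clip (t : ℝ) : ℝ := max 0 (min 1 t)

lemma clip_of_mem {t : ℝ} (h0 : 0 ≤ t) (h1 : t ≤ 1) : clip t = t := by
  unfold clip; rw [min_def, max_def]; split_ifs <;> linarith

lemma clip_of_nonpos {t : ℝ} (h : t ≤ 0) : clip t = 0 := by
  unfold clip; rw [min_def, max_def]; split_ifs <;> linarith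

lemma clip_of_one_le {t : ℝ} (h : 1 ≤ t) : clip t = 1 := by
  unfold clip; rw [min_def, max_def]; split_ifs <;> linarith

lemma clip_pos {t : ℝ} (h : 0 < t) : 0 < clip t := by
  unfold clip; rw [min_def, max_def]; split_ifs <;> linarith

lemma clip_mem (t : ℝ) : clip t ∈ Icc (0:ℝ) 1 := by
  unfold clip; rw [min_def, max_def]; constructor <;> split_ifs <;> linarith

lemma clipD (c : ℝ) : min 1 (clip c + clip c) = clip (c + c) := by
  rcases le_total c 0 with h | h
  · rw [clip_of_nonpos h, clip_of_nonpos (by linarith)]; norm_num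
  · rcases le_total 1 c with h1 | h1
    · rw [clip_of_one_le h1, clip_of_one_le (by linarith)]; norm_num
    · rw [clip_of_mem h h1]
      rcases le_total 1 (c + c) with h2 | h2
      · rw [clip_of_one_le h2, min_eq_left (by linarith)]
      · rw [clip_of_mem (by linarith) h2, min_eq_right (by linarith)]

lemma clipS (c : ℝ) : 1 - min 1 ((1 - clip c) + (1 - clip c)) = clip (c + c - 1) := by
  rcases le_total c 0 with h | h
  · rw [clip_of_nonpos h, clip_of_nonpos (by linarith : c + c - 1 ≤ 0),
      min_eq_left (by linarith)]
    ring
  · rcases le_total 1 c with h1 | h1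
    · rw [clip_of_one_le h1, clip_of_one_le (by linarith : (1:ℝ) ≤ c + c - 1),
      min_eq_right (by linarith)]
      ring
    · rw [clip_of_mem h h1]
      rcases le_total (c + c) 1 with h2 | h2
      · rw [clip_of_nonpos (by linarith : c + c - 1 ≤ 0), min_eq_left (by linarith)]
        ring
      · rw [clip_of_mem (by linarith) (by linarith), min_eq_right (by linarith)]
        ring

section pieces
variable {k : ℕ}

def PiecesOf (f : (Fin k → ℝ) → ℝ) (l : List ((Fin k → ℤ) × ℤ)) : Prop :=
  ∀ x ∈ unitCube k, ∃ p ∈ l, f x = (∑ i, ((p.1 i : ℝ)) * x i) + (p.2 : ℝ)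

lemma pieces_list {f : (Fin k → ℝ) → ℝ} (hm : IsMcNaughton f) :
    ∃ l, PiecesOf f l := by
  obtain ⟨-, -, m, a, b, hab⟩ := hm
  refine ⟨(List.finRange m).map (fun j => (a j, b j)), fun x hx => ?_⟩
  obtain ⟨j, hj⟩ := hab x hx
  exact ⟨(a j, b j), List.mem_map.2 ⟨j, List.mem_finRange j, rfl⟩, hj⟩

lemma mcN_of_list {f : (Fin k → ℝ) → ℝ} (hc : ContinuousOn f (unitCube k))
    (hr : ∀ x ∈ unitCube k, f x ∈ Icc (0:ℝ) 1) {l : List ((Fin k → ℤ) × ℤ)}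
    (hl : PiecesOf f l) : IsMcNaughton f := by
  refine ⟨hc, hr, l.length, fun j => (l.get j).1, fun j => (l.get j).2, fun x hx => ?_⟩
  obtain ⟨p, hp, hval⟩ := hl x hx
  obtain ⟨j, rfl⟩ := List.mem_iff_get.1 hp
  exact ⟨j, hval⟩

end pieces

section ops
variable {k : ℕ}

lemma zero_mem_pieces : IsMcNaughton (fun _ : Fin k → ℝ => (0:ℝ)) := by
  refine ⟨continuousOn_const, fun x _ => by norm_num, 1, fun _ _ => 0, fun _ => 0,
    fun x _ => ⟨0, by simp⟩⟩

noncomputable def zeroMc : McN k := ⟨fun _ => 0, zero_mem_pieces⟩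

lemma proj_mcn (i : Fin k) : IsMcNaughton (fun x : Fin k → ℝ => x i) := by
  refine ⟨(continuous_apply i).continuousOn, fun x hx => hx i,
    1, fun _ j => if j = i then 1 else 0, fun _ => 0, fun x _ => ⟨0, ?_⟩⟩
  rw [Finset.sum_eq_single i]
  · simp
  · intro b _ hb; simp [hb]
  · simp

noncomputable def projMc (i : Fin k) : McN k := ⟨fun x => x i, proj_mcn i⟩

lemma neg_mcn (f : McN k) : IsMcNaughton (fun x => 1 - f.1 x) := by
  obtain ⟨l, hl⟩ := pieces_list f.2
  refine mcN_of_list (continuousOn_const.sub f.2.1)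
    (fun x hx => ⟨by have := (f.2.2.1 x hx).2; linarith,
                  by have := (f.2.2.1 x hx).1; linarith⟩)
    (l := l.map (fun p => (-p.1, 1 - p.2))) (fun x hx => ?_)
  obtain ⟨p, hp, hval⟩ := hl x hx
  refine ⟨(-p.1, 1 - p.2), List.mem_map.2 ⟨p, hp, rfl⟩, ?_⟩
  simp only [hval, Pi.neg_apply, Int.cast_neg, Int.cast_sub, Int.cast_one, neg_mul, Finset.sum_neg_distrib]
  ring

noncomputable def negMc (f : McN k) : McN k := ⟨fun x => 1 - f.1 x, neg_mcn f⟩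

lemma oplus_mcn (f g : McN k) : IsMcNaughton (fun x => min 1 (f.1 x + g.1 x)) := by
  obtain ⟨lf, hlf⟩ := pieces_list f.2
  obtain ⟨lg, hlg⟩ := pieces_list g.2
  refine mcN_of_list (continuousOn_const.inf (f.2.1.add g.2.1))
    (fun x hx => ⟨le_min zero_le_one (by
        have := (f.2.2.1 x hx).1; have := (g.2.2.1 x hx).1; linarith),
      min_le_left _ _⟩)
    (l := ((fun _ => 0, 1) : (Fin k → ℤ) × ℤ) ::
      (lf.flatMap (fun p => lg.map (fun q => (p.1 + q.1, p.2 + q.2))))) (fun x hx => ?_)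
  rcases le_total 1 (f.1 x + g.1 x) with h1 | h1
  · exact ⟨(fun _ => 0, 1), List.mem_cons_self, by simp [min_eq_left h1]⟩
  · obtain ⟨p, hp, hvp⟩ := hlf x hx
    obtain ⟨q, hq, hvq⟩ := hlg x hx
    refine ⟨(p.1 + q.1, p.2 + q.2),
      List.mem_cons_of_mem _ (List.mem_flatMap.2 ⟨p, hp, List.mem_map.2 ⟨q, hq, rfl⟩⟩), ?_⟩
    rw [min_eq_right h1, hvp, hvq]
    simp only [Pi.add_apply, Int.cast_add, add_mul, Finset.sum_add_distrib]
    push_cast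
    ring

noncomputable def oplusMc (f g : McN k) : McN k :=
  ⟨fun x => min 1 (f.1 x + g.1 x), oplus_mcn f g⟩

noncomputable def ominusMc (f g : McN k) : McN k := negMc (oplusMc (negMc f) g)

end ops

section hom
variable {k : ℕ} {P : Set (Fin k → ℝ)} {h : McN k → ℝ}

lemma h_neg (hyp : IsHomToI P h) (f : McN k) : h (negMc f) = 1 - h f :=
  hyp.2.2.2.1 f (negMc f) (fun _ _ => rfl)

lemma h_oplus (hyp : IsHomToI P h) (f g : McN k) :
    h (oplusMc f g) = min 1 (h f + h g) :=
  hyp.2.2.2.2 f g (oplusMc f g) (fun _ _ => rfl)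

lemma dyadic (hyp : IsHomToI P h) :
    ∀ n m : ℕ, m < 2^n → ∀ f : McN k, ∃ g : McN k,
      (∀ x ∈ unitCube k, g.1 x = clip (2^n * f.1 x - m)) ∧
      h g = clip ((2:ℝ)^n * h f - m) := by
  intro n
  induction n with
  | zero =>
    intro m hm f
    interval_cases m
    refine ⟨f, fun x hx => ?_, ?_⟩
    · rw [pow_zero, one_mul, Nat.cast_zero, sub_zero,
        clip_of_mem (f.2.2.1 x hx).1 (f.2.2.1 x hx).2]
    · rw [pow_zero, one_mul, Nat.cast_zero, sub_zero,
        clip_of_mem (hyp.1 f).1 (hyp.1 f).2]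
  | succ n ih =>
    intro m hm f
    have h2n : (2:ℕ)^(n+1) = 2^n + 2^n := by rw [pow_succ]; ring
    rcases Nat.even_or_odd m with ⟨r, hr⟩ | ⟨r, hr⟩
    · have hrlt : r < 2^n := by omega
      obtain ⟨g', hg'v, hg'h⟩ := ih r hrlt f
      refine ⟨oplusMc g' g', fun x hx => ?_, ?_⟩
      · show min 1 (g'.1 x + g'.1 x) = _
        rw [hg'v x hx, clipD]
        congr 1
        subst hr; push_cast; ring
      · rw [h_oplus hyp, hg'h, clipD]
        congr 1
        subst hr; push_cast; ring
    · have hrlt : r < 2^n := by omega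
      obtain ⟨g', hg'v, hg'h⟩ := ih r hrlt f
      refine ⟨ominusMc g' (negMc g'), fun x hx => ?_, ?_⟩
      · show 1 - min 1 ((1 - g'.1 x) + (1 - g'.1 x)) = _
        rw [hg'v x hx, clipS]
        congr 1
        subst hr; push_cast; ring
      · show h (negMc (oplusMc (negMc g') (negMc g'))) = _
        rw [h_neg hyp, h_oplus hyp, h_neg hyp, hg'h, clipS]
        congr 1
        subst hr; push_cast; ring

lemma eval_exists (hyp : IsHomToI P h) (hPcomp : IsCompact P) (hPne : P.Nonempty)
    (hPc : P ⊆ unitCube k) : ∃ q ∈ P, ∀ f : McN k, h f = f.1 q := by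
  have hzero : h zeroMc = 0 := hyp.2.2.1 zeroMc (fun _ _ => rfl)
  have hone : h (negMc zeroMc) = 1 := by rw [h_neg hyp, hzero]; ring
  haveI hι : Nonempty {f : McN k // h f = 0} := ⟨⟨zeroMc, hzero⟩⟩
  set Z : {f : McN k // h f = 0} → Set (Fin k → ℝ) :=
    fun i => P ∩ i.1.1 ⁻¹' {0} with hZ
  have hclosed : ∀ i, IsClosed (Z i) := fun i =>
    (i.1.2.1.mono hPc).preimage_isClosed_of_isClosed hPcomp.isClosed isClosed_singleton
  have hcompact : ∀ i, IsCompact (Z i) := fun i =>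
    hPcomp.of_isClosed_subset (hclosed i) inter_subset_left
  have hnonempty : ∀ i, (Z i).Nonempty := by
    rintro ⟨f, hf0⟩
    by_contra hne
    push_neg at hne
    rw [eq_empty_iff_forall_notMem] at hne
    have hfpos : ∀ x ∈ P, 0 < f.1 x := by
      intro x hxP
      rcases (f.2.2.1 x (hPc hxP)).1.lt_or_eq with hlt | heq
      · exact hlt
      · exact absurd (mem_inter hxP (by simp [← heq])) (hne x)
    obtain ⟨x₀, hx₀P, hx₀min⟩ := hPcomp.exists_isMinOn hPne (f.2.1.mono hPc)
    set c := f.1 x₀ with hc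
    have hcpos : 0 < c := hfpos x₀ hx₀P
    obtain ⟨n, hn⟩ := pow_unbounded_of_one_lt (1/c) (one_lt_two (α := ℝ))
    obtain ⟨g, hgv, hgh⟩ := dyadic hyp n 0 (pow_pos two_pos n) f
    have hg0 : h g = 0 := by
      rw [hgh, hf0]; norm_num [clip]
    have hg1 : Set.EqOn g.1 (negMc zeroMc).1 P := by
      intro x hxP
      have hcx : c ≤ f.1 x := isMinOn_iff.1 hx₀min x hxP
      have : (1:ℝ) ≤ 2^n * f.1 x := by
        have h2 : (1:ℝ) < 2^n * c := by
          rw [div_lt_iff₀ hcpos] at hn; linarith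
        have : (2:ℝ)^n * c ≤ 2^n * f.1 x :=
          mul_le_mul_of_nonneg_left hcx (by positivity)
        linarith
      rw [hgv x (hPc hxP), Nat.cast_zero, sub_zero, clip_of_one_le this]
      show (1:ℝ) = 1 - (0:ℝ)
      norm_num
    have := hyp.2.1 g (negMc zeroMc) hg1
    rw [hg0, hone] at this
    exact zero_ne_one this
  have hdir : Directed (· ⊇ ·) Z := by
    intro i j
    refine ⟨⟨oplusMc i.1 j.1, by rw [h_oplus hyp, i.2, j.2]; norm_num⟩, ?_, ?_⟩ <;>
    · rintro x ⟨hxP, hx0⟩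
      simp only [mem_preimage, mem_singleton_iff] at hx0
      have hi0 : 0 ≤ i.1.1 x := (i.1.2.2.1 x (hPc hxP)).1
      have hj0 : 0 ≤ j.1.1 x := (j.1.2.2.1 x (hPc hxP)).1
      have hsum : i.1.1 x + j.1.1 x = 0 := by
        rcases le_total 1 (i.1.1 x + j.1.1 x) with hle | hle
        · rw [show (oplusMc i.1 j.1).1 x = min 1 (i.1.1 x + j.1.1 x) from rfl,
            min_eq_left hle] at hx0
          linarith
        · rw [show (oplusMc i.1 j.1).1 x = min 1 (i.1.1 x + j.1.1 x) from rfl,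
            min_eq_right hle] at hx0
          exact hx0
      exact ⟨hxP, by simp only [mem_preimage, mem_singleton_iff]; linarith⟩
  obtain ⟨q, hq⟩ := IsCompact.nonempty_iInter_of_directed_nonempty_isCompact_isClosed
    Z hdir hnonempty hcompact hclosed
  have hqP : q ∈ P := (mem_iInter.1 hq ⟨zeroMc, hzero⟩).1
  have key : ∀ f : McN k, h f = 0 → f.1 q = 0 := fun f hf => by
    have := (mem_iInter.1 hq ⟨f, hf⟩).2
    simpa using this
  have not_lt : ∀ f : McN k, ¬ h f < f.1 q := by
    intro f hlt
    set t := h f with ht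
    set s := f.1 q with hs
    have ht0 : 0 ≤ t := (hyp.1 f).1
    have hs1 : s ≤ 1 := (f.2.2.1 q (hPc hqP)).2
    have hst : 0 < s - t := by linarith
    obtain ⟨n, hn⟩ := pow_unbounded_of_one_lt (1/(s - t)) (one_lt_two (α := ℝ))
    have hn' : 1 < 2^n * (s - t) := by rw [div_lt_iff₀ hst] at hn; linarith
    set m := ⌊(2:ℝ)^n * t⌋₊ + 1 with hm
    have h1 : (2:ℝ)^n * t < m := by
      rw [hm]; push_cast; exact Nat.lt_floor_add_one _
    have h2 : (m:ℝ) < 2^n * s := by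
      have hfl : (⌊(2:ℝ)^n * t⌋₊ : ℝ) ≤ 2^n * t :=
        Nat.floor_le (mul_nonneg (by positivity) ht0)
      rw [hm]; push_cast; nlinarith
    have hmlt : m < 2^n := by
      have hr : (m:ℝ) < 2^n := by nlinarith [pow_pos (two_pos (α := ℝ)) n]
      have h2n : ((2:ℝ))^n = ((2^n : ℕ) : ℝ) := by push_cast; ring
      rw [h2n] at hr
      exact_mod_cast hr
    obtain ⟨g, hgv, hgh⟩ := dyadic hyp n m hmlt f
    have hg0 : h g = 0 := by rw [hgh, clip_of_nonpos (by linarith)]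
    have hq0 : g.1 q = 0 := key g hg0
    rw [hgv q (hPc hqP)] at hq0
    have : (0:ℝ) < clip (2^n * s - m) := clip_pos (by linarith)
    linarith
  refine ⟨q, hqP, fun f => ?_⟩
  have h1 := not_lt f
  have h2 := not_lt (negMc f)
  rw [h_neg hyp] at h2
  have h2' : ¬ (1 - h f < 1 - f.1 q) := h2
  push_neg at h1 h2'
  linarith

end hom

/-- For a finitely presented MV-algebra M(P), P ⊆ [0,1]^k a rational polyhedron,
the homomorphisms M(P) → [0,1] are in bijection with the points of P: every
point gives the evaluation homomorphism, and every homomorphism is evaluation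
at a unique point of P. -/
theorem homs_biject_with_points {k : ℕ} (P : Set (Fin k → ℝ))
    (hP : IsRationalPolyhedron P) (hPc : P ⊆ unitCube k) :
    (∀ p ∈ P, IsHomToI P (fun f : McN k => f.1 p)) ∧
    (∀ h : McN k → ℝ, IsHomToI P h → ∃! p, p ∈ P ∧ ∀ f : McN k, h f = f.1 p) := by
  constructor
  · intro p hp
    exact ⟨fun f => f.2.2.1 p (hPc hp), fun f g hfg => hfg hp, fun u hu => hu p hp,
      fun f u hu => hu p hp, fun f g u hu => hu p hp⟩
  · intro h hyp
    rcases P.eq_empty_or_nonempty with rfl | hPne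
    · exfalso
      have h0 : h zeroMc = 0 :=
        hyp.2.2.1 zeroMc (fun x hx => absurd hx (notMem_empty x))
      have h1 : h zeroMc = 1 - h zeroMc :=
        hyp.2.2.2.1 zeroMc zeroMc (fun x hx => absurd hx (notMem_empty x))
      rw [h0] at h1
      norm_num at h1
    · have hPcomp : IsCompact P := by
        obtain ⟨m, V, rfl⟩ := hP
        exact isCompact_iUnion fun j => ((V j).finite_toSet.image _).isCompact_convexHull ℝ
      obtain ⟨q, hqP, heval⟩ := eval_exists hyp hPcomp hPne hPc
      refine ⟨q, ⟨hqP, heval⟩, ?_⟩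
      rintro p ⟨hpP, hpe⟩
      funext i
      exact ((hpe (projMc i)).symm.trans (heval (projMc i)) : p i = q i)
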